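/- For every integer n ≥ 0, ∑_{p=0}^{⌊n/2⌋} (1/(3p+1))·C(3p+1, p)·C(n+p, 3p) = (1/(n+1))·C(2n, n), as an identity of rational numbers; equivalently, ∑_{p=0}^{⌊n/2⌋} C_{p,3}·C(n+p, 3p) equals the n-th Catalan number C_n = (1/(n+1))·C(2n,n), where C_{p,3} = (1/(3p+1))·C(3p+1, p) is the p-th 3-Catalan number. -/

import Mathlib

open Finset

private def wa (n p : ℕ) : ℚ :=
  ((1 : ℚ) / (3 * p + 1)) * (Nat.choose (3 * p + 1) p) * (Nat.choose (n + p) (3 * p))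

private def wg (n p : ℕ) : ℚ :=
  2 * p * (Nat.choose (3 * p) p) * (Nat.choose (n + p) (3 * p - 1))

private lemma cast_choose' (a b c : ℕ) (h : a = b + c) :
    ((Nat.choose a b : ℕ) : ℚ) = (Nat.factorial a) / (Nat.factorial b * Nat.factorial c) := by
  subst h
  rw [Nat.cast_choose ℚ (Nat.le_add_right _ _), Nat.add_sub_cancel_left]

private lemma fac_ne (m : ℕ) : ((Nat.factorial m : ℕ) : ℚ) ≠ 0 :=
  Nat.cast_ne_zero.2 (Nat.factorial_ne_zero m)

private lemma wkey (n p : ℕ) :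
    ((n:ℚ)+1)*((n:ℚ)+2) * wa (n+1) p - 2*((n:ℚ)+1)*(2*(n:ℚ)+1) * wa n p
      = wg n p - wg n (p+1) := by
  rcases p with _ | q
  · -- p = 0
    simp only [wa, wg]
    norm_num
    rw [Nat.cast_choose_two]
    push_cast
    field_simp
    ring
  · rcases (show n+2 ≤ 2*(q+1) ∨ n = 2*q+1 ∨ n = 2*q+2 ∨ ∃ k, n = 2*q+k+3 by
      rcases Nat.lt_or_ge n (2*q+3) with h | h
      · omega
      · right; right; right; exact ⟨n - (2*q+3), by omega⟩) with h | h | ⟨h⟩ | ⟨k, h⟩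
    · -- all terms vanish
      simp only [wa, wg]
      rw [Nat.choose_eq_zero_of_lt (show n+1+(q+1) < 3*(q+1) by omega),
          Nat.choose_eq_zero_of_lt (show n+(q+1) < 3*(q+1) by omega),
          Nat.choose_eq_zero_of_lt (show n+(q+1) < 3*(q+1)-1 by omega),
          Nat.choose_eq_zero_of_lt (show n+(q+2) < 3*(q+2)-1 by omega)]
      norm_num
    · -- n = 2q+1
      subst h
      simp only [wa, wg]
      rw [show 3*(q+1)-1 = 3*q+2 from by omega, show 3*(q+2)-1 = 3*q+5 from by omega,
          show 3*(q+1)+1 = 3*q+4 from by ring, show 3*(q+1) = 3*q+3 from by ring,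
          show 3*(q+2) = 3*q+6 from by ring,
          show 2*q+1+(q+1) = 3*q+2 from by ring,
          show 2*q+1+1+(q+1) = 3*q+3 from by ring,
          show 2*q+1+(q+2) = 3*q+3 from by ring]
      rw [Nat.choose_eq_zero_of_lt (show 3*q+2 < 3*q+3 by omega),
          Nat.choose_eq_zero_of_lt (show 3*q+3 < 3*q+5 by omega),
          Nat.choose_self, Nat.choose_self]
      rw [cast_choose' (3*q+4) (q+1) (2*q+3) (by ring),
          cast_choose' (3*q+3) (q+1) (2*q+2) (by ring)]
      have f1 : (Nat.factorial (3*q+4) : ℚ) = (3*q+4) * (Nat.factorial (3*q+3)) := by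
        rw [show 3*q+4 = (3*q+3)+1 from by ring, Nat.factorial_succ]; push_cast; ring
      have f2 : (Nat.factorial (2*q+3) : ℚ) = (2*q+3) * (Nat.factorial (2*q+2)) := by
        rw [show 2*q+3 = (2*q+2)+1 from by ring, Nat.factorial_succ]; push_cast; ring
      rw [f1, f2]
      have n1 := fac_ne (3*q+3)
      have n2 := fac_ne (q+1)
      have n3 := fac_ne (2*q+2)
      push_cast
      field_simp
      ring
    · -- n = 2q+2
      subst h
      simp only [wa, wg]
      rw [show 3*(q+1)-1 = 3*q+2 from by omega, show 3*(q+2)-1 = 3*q+5 from by omega,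
          show 3*(q+1)+1 = 3*q+4 from by ring, show 3*(q+1) = 3*q+3 from by ring,
          show 3*(q+2) = 3*q+6 from by ring,
          show 2*q+2+(q+1) = 3*q+3 from by ring,
          show 2*q+2+1+(q+1) = 3*q+4 from by ring,
          show 2*q+2+(q+2) = 3*q+4 from by ring]
      rw [Nat.choose_eq_zero_of_lt (show 3*q+4 < 3*q+5 by omega),
          Nat.choose_self,
          show (3*q+4) = (3*q+3)+1 from by ring, Nat.choose_succ_self_right,
          show (3*q+3) = (3*q+2)+1 from by ring, Nat.choose_succ_self_right]
      rw [cast_choose' (3*q+2+1+1) (q+1) (2*q+3) (by ring),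
          cast_choose' (3*q+2+1) (q+1) (2*q+2) (by ring)]
      have f1 : (Nat.factorial (3*q+2+1+1) : ℚ) = (3*q+4) * (Nat.factorial (3*q+2+1)) := by
        rw [show 3*q+2+1+1 = (3*q+2+1)+1 from by ring, Nat.factorial_succ]; push_cast; ring
      have f2 : (Nat.factorial (2*q+3) : ℚ) = (2*q+3) * (Nat.factorial (2*q+2)) := by
        rw [show 2*q+3 = (2*q+2)+1 from by ring, Nat.factorial_succ]; push_cast; ring
      rw [f1, f2]
      have n1 := fac_ne (3*q+2+1)
      have n2 := fac_ne (q+1)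
      have n3 := fac_ne (2*q+2)
      push_cast
      field_simp
      ring
    · -- generic case n = 2q+k+3
      subst h
      simp only [wa, wg]
      have e3 : 3 * (q+1) - 1 = 3*q+2 := by omega
      have e5 : 3 * (q+2) - 1 = 3*q+5 := by omega
      have e1 : 3 * (q+1) + 1 = 3*q+4 := by ring
      have e2 : 3 * (q+1) = 3*q+3 := by ring
      have e4 : 3 * (q+2) = 3*q+6 := by ring
      have e6 : 2*q+k+3 + (q+1) = 3*q+k+4 := by ring
      have e7 : 2*q+k+3 + 1 + (q+1) = 3*q+k+5 := by ring
      have e8 : 2*q+k+3 + (q+2) = 3*q+k+5 := by ring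
      rw [e3, e5, e1, e2, e4, e6, e7, e8]
      rw [cast_choose' (3*q+4) (q+1) (2*q+3) (by ring),
          cast_choose' (3*q+k+5) (3*q+3) (k+2) (by ring),
          cast_choose' (3*q+k+4) (3*q+3) (k+1) (by ring),
          cast_choose' (3*q+3) (q+1) (2*q+2) (by ring),
          cast_choose' (3*q+k+4) (3*q+2) (k+2) (by ring),
          cast_choose' (3*q+6) (q+2) (2*q+4) (by ring),
          cast_choose' (3*q+k+5) (3*q+5) k (by ring)]
      have f1 : (Nat.factorial (3*q+4) : ℚ) = (3*q+4) * ((3*q+3) * (Nat.factorial (3*q+2))) := by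
        rw [show 3*q+4 = (3*q+3)+1 from by ring, Nat.factorial_succ,
           show 3*q+3 = (3*q+2)+1 from by ring, Nat.factorial_succ]
        push_cast; ring
      have f2 : (Nat.factorial (3*q+3) : ℚ) = (3*q+3) * (Nat.factorial (3*q+2)) := by
        rw [show 3*q+3 = (3*q+2)+1 from by ring, Nat.factorial_succ]; push_cast; ring
      have f3 : (Nat.factorial (3*q+6) : ℚ)
          = (3*q+6)*((3*q+5)*((3*q+4)*((3*q+3) * (Nat.factorial (3*q+2))))) := by
        rw [show 3*q+6 = (3*q+5)+1 from by ring, Nat.factorial_succ,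
            show 3*q+5 = (3*q+4)+1 from by ring, Nat.factorial_succ,
            show 3*q+4 = (3*q+3)+1 from by ring, Nat.factorial_succ,
            show 3*q+3 = (3*q+2)+1 from by ring, Nat.factorial_succ]
        push_cast; ring
      have f4 : (Nat.factorial (3*q+5) : ℚ)
          = (3*q+5)*((3*q+4)*((3*q+3) * (Nat.factorial (3*q+2)))) := by
        rw [show 3*q+5 = (3*q+4)+1 from by ring, Nat.factorial_succ,
            show 3*q+4 = (3*q+3)+1 from by ring, Nat.factorial_succ,
            show 3*q+3 = (3*q+2)+1 from by ring, Nat.factorial_succ]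
        push_cast; ring
      have f5 : (Nat.factorial (2*q+3) : ℚ) = (2*q+3) * (Nat.factorial (2*q+2)) := by
        rw [show 2*q+3 = (2*q+2)+1 from by ring, Nat.factorial_succ]; push_cast; ring
      have f6 : (Nat.factorial (2*q+4) : ℚ) = (2*q+4)*((2*q+3) * (Nat.factorial (2*q+2))) := by
        rw [show 2*q+4 = (2*q+3)+1 from by ring, Nat.factorial_succ,
            show 2*q+3 = (2*q+2)+1 from by ring, Nat.factorial_succ]
        push_cast; ring
      have f7 : (Nat.factorial (q+2) : ℚ) = (q+2) * (Nat.factorial (q+1)) := by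
        rw [show q+2 = (q+1)+1 from by ring, Nat.factorial_succ]; push_cast; ring
      have f8 : (Nat.factorial (3*q+k+5) : ℚ) = (3*q+k+5) * (Nat.factorial (3*q+k+4)) := by
        rw [show 3*q+k+5 = (3*q+k+4)+1 from by ring, Nat.factorial_succ]; push_cast; ring
      have f9 : (Nat.factorial (k+1) : ℚ) = (k+1) * (Nat.factorial k) := by
        rw [Nat.factorial_succ]; push_cast; ring
      have f10 : (Nat.factorial (k+2) : ℚ) = (k+2)*((k+1) * (Nat.factorial k)) := by
        rw [show k+2 = (k+1)+1 from by ring, Nat.factorial_succ, Nat.factorial_succ]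
        push_cast; ring
      rw [f1, f2, f3, f4, f5, f6, f7, f8, f9, f10]
      have n1 := fac_ne (3*q+2)
      have n2 := fac_ne (q+1)
      have n3 := fac_ne (2*q+2)
      have n4 := fac_ne k
      have n5 := fac_ne (3*q+k+4)
      push_cast
      field_simp
      ring

private lemma sum_wa_ext (n N : ℕ) (h : n/2+1 ≤ N) :
    ∑ p ∈ Finset.range N, wa n p = ∑ p ∈ Finset.range (n/2+1), wa n p := by
  refine (Finset.sum_subset (Finset.range_subset_range.2 h) (fun p hp hp' => ?_)).symm
  simp only [Finset.mem_range] at hp hp'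
  simp only [wa]
  rw [Nat.choose_eq_zero_of_lt (show n+p < 3*p by omega)]
  norm_num

private lemma wrec (n : ℕ) :
    ((n:ℚ)+1)*((n:ℚ)+2) * ∑ p ∈ Finset.range (n+2), wa (n+1) p
      = 2*((n:ℚ)+1)*(2*(n:ℚ)+1) * ∑ p ∈ Finset.range (n+2), wa n p := by
  have ht : ∑ p ∈ Finset.range (n+2), (wg n p - wg n (p+1)) = wg n 0 - wg n (n+2) :=
    Finset.sum_range_sub' _ _
  have h0 : wg n 0 = 0 := by simp [wg]
  have hN : wg n (n+2) = 0 := by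
    simp only [wg]
    rw [Nat.choose_eq_zero_of_lt (show n+(n+2) < 3*(n+2)-1 by omega)]
    norm_num
  have hsum : ∑ p ∈ Finset.range (n+2),
      (((n:ℚ)+1)*((n:ℚ)+2) * wa (n+1) p - 2*((n:ℚ)+1)*(2*(n:ℚ)+1) * wa n p) = 0 := by
    rw [Finset.sum_congr rfl (fun p _ => wkey n p), ht, h0, hN]; ring
  rw [Finset.sum_sub_distrib, ← Finset.mul_sum, ← Finset.mul_sum] at hsum
  linarith

theorem sum_ternary_catalan_eq_catalan (n : ℕ) :
    ∑ p ∈ Finset.range (n / 2 + 1),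
      ((1 : ℚ) / (3 * p + 1)) * (Nat.choose (3 * p + 1) p) * (Nat.choose (n + p) (3 * p))
      = ((1 : ℚ) / (n + 1)) * (Nat.choose (2 * n) n) := by
  have main : ∀ n : ℕ, ∑ p ∈ Finset.range (n/2+1), wa n p
      = ((1 : ℚ) / (n + 1)) * (Nat.choose (2 * n) n) := by
    intro n
    induction n with
    | zero => norm_num [wa]
    | succ n ih =>
      have hrec := wrec n
      rw [sum_wa_ext (n+1) (n+2) (by omega), sum_wa_ext n (n+2) (by omega), ih] at hrec
      have hcb : ((n:ℚ)+1) * ((2*(n+1)).choose (n+1) : ℕ) = 2*(2*(n:ℚ)+1) * ((2*n).choose n : ℕ) := by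
        have h := congrArg (fun m : ℕ => (m : ℚ)) (Nat.succ_mul_centralBinom_succ n)
        simp only [Nat.centralBinom] at h
        push_cast at h
        linarith
      have h2 : (((n:ℚ))+1)*((n:ℚ)+2) *
          (((1 : ℚ) / ((n:ℚ)+1+1)) * ((2*(n+1)).choose (n+1) : ℕ))
          = 2*((n:ℚ)+1)*(2*(n:ℚ)+1) * (((1 : ℚ) / ((n:ℚ)+1)) * ((2*n).choose n : ℕ)) := by
        have hne1 : ((n:ℚ)+1) ≠ 0 := by positivity
        have hne2 : ((n:ℚ)+2) ≠ 0 := by positivity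
        field_simp
        linear_combination ((n:ℚ)+2) * hcb
      have hA : ((n:ℚ)+1)*((n:ℚ)+2) ≠ 0 := by positivity
      have := mul_left_cancel₀ hA (hrec.trans h2.symm)
      rw [this]
      push_cast
      ring_nf
  exact main n
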